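/- arXiv:2209.14453 — 2 statements merged into one kernel-verified Lean document; each statement's English description precedes it below -/
import Mathlib

section
/- Let L(z) = -∑_{i=1}^N [ (k_i/2)(2λ'_i + z)^{-1} + 2 d_i² (λ'_i)² (2λ'_i + z)^{-2} ] with distinct λ'_i > 0, positive integers k_i, and reals d_i ≥ 0. Then the data {(λ'_i, k_i, d_i)} is uniquely determined by the function L on any neighborhood of 0: if two such families give the same function L near 0, then the families are equal. -/
open Real BigOperators

/-- The logarithmic derivative of the Gaussian generating function:
`L(z) = -∑_i [(k_i/2)(2λ'_i+z)⁻¹ + 2 d_i² λ'_i² (2λ'_i+z)⁻²]`. -/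
noncomputable def Lfun {N : ℕ} (lam : Fin N → ℝ) (k : Fin N → ℕ)
    (d : Fin N → ℝ) (z : ℝ) : ℝ :=
  -∑ i, ((k i : ℝ) / 2 * (2 * lam i + z)⁻¹ +
          2 * (d i)^2 * (lam i)^2 * ((2 * lam i + z)^2)⁻¹)

open Polynomial

noncomputable def Pfam (S : Finset ℝ) {N : ℕ} (lam : Fin N → ℝ) (k : Fin N → ℕ)
    (d : Fin N → ℝ) : Polynomial ℝ :=
  ∑ i, (C ((k i : ℝ) / 2) * (C (2 * lam i) + X) + C (2 * (d i)^2 * (lam i)^2)) *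
    ∏ l ∈ S.erase (lam i), (C (2 * l) + X)^2

lemma Pfam_eval (S : Finset ℝ) {N : ℕ} (lam : Fin N → ℝ) (k : Fin N → ℕ)
    (d : Fin N → ℝ) (z : ℝ) (hz : ∀ l ∈ S, 2 * l + z ≠ 0) (hmem : ∀ i, lam i ∈ S) :
    (Pfam S lam k d).eval z = (∏ l ∈ S, (2 * l + z)^2) * (-(Lfun lam k d z)) := by
  rw [Lfun, neg_neg, Finset.mul_sum, Pfam, Polynomial.eval_finset_sum]
  refine Finset.sum_congr rfl fun i _ => ?_
  rw [← Finset.mul_prod_erase S _ (hmem i)]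
  have h1 : 2 * lam i + z ≠ 0 := hz _ (hmem i)
  simp only [eval_mul, eval_add, eval_prod, eval_pow, eval_C, eval_X]
  field_simp

lemma term_eval_zero (S : Finset ℝ) (l0 : ℝ) (hS : l0 ∈ S) {N : ℕ}
    (lam : Fin N → ℝ) (k : Fin N → ℕ) (d : Fin N → ℝ) (i : Fin N) (hne : lam i ≠ l0) :
    ((C ((k i : ℝ) / 2) * (C (2 * lam i) + X) + C (2 * (d i)^2 * (lam i)^2)) *
      ∏ l ∈ S.erase (lam i), (C (2 * l) + X)^2).eval (-(2 * l0)) = 0 ∧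
    (Polynomial.derivative ((C ((k i : ℝ) / 2) * (C (2 * lam i) + X) + C (2 * (d i)^2 * (lam i)^2)) *
      ∏ l ∈ S.erase (lam i), (C (2 * l) + X)^2)).eval (-(2 * l0)) = 0 := by
  have hmem : l0 ∈ S.erase (lam i) := Finset.mem_erase.2 ⟨fun h => hne h.symm, hS⟩
  rw [← Finset.mul_prod_erase _ _ hmem]
  constructor
  · simp only [eval_mul, eval_add, eval_pow, eval_C, eval_X]
    ring
  · simp only [derivative_mul, derivative_add, derivative_C, derivative_X, derivative_pow,
      derivative_one, eval_mul, eval_add, eval_pow, eval_C, eval_X, eval_natCast]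
    ring

lemma Pfam_eval_pole_none (S : Finset ℝ) (l0 : ℝ) (hS : l0 ∈ S) {N : ℕ}
    (lam : Fin N → ℝ) (k : Fin N → ℕ) (d : Fin N → ℝ) (hno : ∀ i, lam i ≠ l0) :
    (Pfam S lam k d).eval (-(2 * l0)) = 0 ∧
    (Polynomial.derivative (Pfam S lam k d)).eval (-(2 * l0)) = 0 := by
  rw [Pfam, derivative_sum, Polynomial.eval_finset_sum, Polynomial.eval_finset_sum]
  constructor
  · exact Finset.sum_eq_zero fun i _ => (term_eval_zero S l0 hS lam k d i (hno i)).1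
  · exact Finset.sum_eq_zero fun i _ => (term_eval_zero S l0 hS lam k d i (hno i)).2

lemma Pfam_eval_pole (S : Finset ℝ) (l0 : ℝ) (hS : l0 ∈ S) {N : ℕ}
    (lam : Fin N → ℝ) (k : Fin N → ℕ) (d : Fin N → ℝ)
    (hinj : Function.Injective lam) (i0 : Fin N) (h0 : lam i0 = l0) :
    (Pfam S lam k d).eval (-(2 * l0)) =
      (2 * (d i0)^2 * l0^2) * ((∏ l ∈ S.erase l0, (C (2 * l) + X)^2 : Polynomial ℝ)).eval (-(2 * l0)) ∧
    (Polynomial.derivative (Pfam S lam k d)).eval (-(2 * l0)) =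
      ((k i0 : ℝ) / 2) * ((∏ l ∈ S.erase l0, (C (2 * l) + X)^2 : Polynomial ℝ)).eval (-(2 * l0)) +
      (2 * (d i0)^2 * l0^2) *
        (Polynomial.derivative (∏ l ∈ S.erase l0, (C (2 * l) + X)^2 : Polynomial ℝ)).eval (-(2 * l0)) := by
  rw [Pfam, derivative_sum, Polynomial.eval_finset_sum, Polynomial.eval_finset_sum]
  have hterm : ∀ j : Fin N, j ≠ i0 → lam j ≠ l0 := by
    intro j hj h; exact hj (hinj (h.trans h0.symm))
  constructor
  · rw [Finset.sum_eq_single i0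
      (fun j _ hj => (term_eval_zero S l0 hS lam k d j (hterm j hj)).1)
      (fun h => absurd (Finset.mem_univ i0) h)]
    rw [h0]
    simp only [eval_mul, eval_add, eval_C, eval_X]
    ring
  · rw [Finset.sum_eq_single i0
      (fun j _ hj => (term_eval_zero S l0 hS lam k d j (hterm j hj)).2)
      (fun h => absurd (Finset.mem_univ i0) h)]
    rw [h0]
    simp only [derivative_mul, derivative_add, derivative_C, derivative_X,
      eval_add, eval_mul, eval_C, eval_X, eval_zero, eval_one]
    ring

/-- the family `{(λ'_i, k_i, d_i)}` (distinct `λ'_i > 0`,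
`k_i` positive integers, `d_i ≥ 0`) is uniquely determined by the function
`L` on any neighborhood of `0`. -/
theorem normal_params_determined_by_L (N₁ N₂ : ℕ)
    (lam₁ : Fin N₁ → ℝ) (k₁ : Fin N₁ → ℕ) (d₁ : Fin N₁ → ℝ)
    (lam₂ : Fin N₂ → ℝ) (k₂ : Fin N₂ → ℕ) (d₂ : Fin N₂ → ℝ)
    (hlam₁ : ∀ i, 0 < lam₁ i) (hlam₂ : ∀ i, 0 < lam₂ i)
    (hinj₁ : Function.Injective lam₁) (hinj₂ : Function.Injective lam₂)
    (hk₁ : ∀ i, 0 < k₁ i) (hk₂ : ∀ i, 0 < k₂ i)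
    (hd₁ : ∀ i, 0 ≤ d₁ i) (hd₂ : ∀ i, 0 ≤ d₂ i)
    (ε : ℝ) (hε : 0 < ε)
    (heq : ∀ z : ℝ, |z| < ε → Lfun lam₁ k₁ d₁ z = Lfun lam₂ k₂ d₂ z) :
    ∃ σ : Fin N₁ ≃ Fin N₂, ∀ i,
      lam₂ (σ i) = lam₁ i ∧ k₂ (σ i) = k₁ i ∧ d₂ (σ i) = d₁ i := by
  classical
  set S : Finset ℝ := Finset.image lam₁ Finset.univ ∪ Finset.image lam₂ Finset.univ with hSdef
  have hSpos : ∀ l ∈ S, 0 < l := by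
    intro l hl
    rw [hSdef, Finset.mem_union] at hl
    rcases hl with hl | hl <;> rw [Finset.mem_image] at hl <;>
      obtain ⟨i, -, rfl⟩ := hl
    · exact hlam₁ i
    · exact hlam₂ i
  have hmem₁ : ∀ i, lam₁ i ∈ S := fun i => by
    rw [hSdef, Finset.mem_union]; exact Or.inl (Finset.mem_image_of_mem _ (Finset.mem_univ i))
  have hmem₂ : ∀ j, lam₂ j ∈ S := fun j => by
    rw [hSdef, Finset.mem_union]; exact Or.inr (Finset.mem_image_of_mem _ (Finset.mem_univ j))
  have hP : Pfam S lam₁ k₁ d₁ = Pfam S lam₂ k₂ d₂ := by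
    rw [← sub_eq_zero]
    apply Polynomial.eq_zero_of_infinite_isRoot
    apply Set.Infinite.mono (s := Set.Ioo (0:ℝ) ε) ?_ (Set.Ioo_infinite hε)
    intro z hz
    have hz0 : 0 < z := hz.1
    have hden : ∀ l ∈ S, 2 * l + z ≠ 0 := fun l hl =>
      ne_of_gt (by have := hSpos l hl; linarith)
    have hL := heq z (by rw [abs_of_pos hz0]; exact hz.2)
    simp only [Set.mem_setOf_eq, Polynomial.IsRoot, Polynomial.eval_sub]
    rw [Pfam_eval S lam₁ k₁ d₁ z hden hmem₁, Pfam_eval S lam₂ k₂ d₂ z hden hmem₂, hL,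
      sub_self]
  have hW : ∀ l0 ∈ S,
      ((∏ l ∈ S.erase l0, (C (2 * l) + X)^2 : Polynomial ℝ)).eval (-(2 * l0)) ≠ 0 := by
    intro l0 hl0
    rw [Polynomial.eval_prod]
    apply Finset.prod_ne_zero_iff.2
    intro l hl
    have hne : l ≠ l0 := (Finset.mem_erase.1 hl).1
    simp only [eval_pow, eval_add, eval_C, eval_X]
    have h2 : 2 * l + -(2 * l0) ≠ 0 := fun h => hne (by linarith)
    exact pow_ne_zero 2 h2
  have hex₁ : ∀ i : Fin N₁, ∃ j, lam₂ j = lam₁ i := by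
    intro i
    by_contra h
    push_neg at h
    have h2 := Pfam_eval_pole_none S (lam₁ i) (hmem₁ i) lam₂ k₂ d₂ h
    have h1 := Pfam_eval_pole S (lam₁ i) (hmem₁ i) lam₁ k₁ d₁ hinj₁ i rfl
    have hWne := hW (lam₁ i) (hmem₁ i)
    have e1 : 2 * (d₁ i)^2 * (lam₁ i)^2 = 0 := by
      have := h1.1
      rw [hP, h2.1] at this
      rcases mul_eq_zero.1 this.symm with h' | h'
      · exact h'
      · exact absurd h' hWne
    have e2 := h1.2
    rw [hP, h2.2, e1, zero_mul, add_zero] at e2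
    rcases mul_eq_zero.1 e2.symm with h' | h'
    · have : (k₁ i : ℝ) = 0 := by linarith
      exact absurd (Nat.cast_eq_zero.1 this) (hk₁ i).ne'
    · exact absurd h' hWne
  have hex₂ : ∀ j : Fin N₂, ∃ i, lam₁ i = lam₂ j := by
    intro j
    by_contra h
    push_neg at h
    have h2 := Pfam_eval_pole_none S (lam₂ j) (hmem₂ j) lam₁ k₁ d₁ h
    have h1 := Pfam_eval_pole S (lam₂ j) (hmem₂ j) lam₂ k₂ d₂ hinj₂ j rfl
    have hWne := hW (lam₂ j) (hmem₂ j)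
    have e1 : 2 * (d₂ j)^2 * (lam₂ j)^2 = 0 := by
      have := h1.1
      rw [← hP, h2.1] at this
      rcases mul_eq_zero.1 this.symm with h' | h'
      · exact h'
      · exact absurd h' hWne
    have e2 := h1.2
    rw [← hP, h2.2, e1, zero_mul, add_zero] at e2
    rcases mul_eq_zero.1 e2.symm with h' | h'
    · have : (k₂ j : ℝ) = 0 := by linarith
      exact absurd (Nat.cast_eq_zero.1 this) (hk₂ j).ne'
    · exact absurd h' hWne
  choose f hf using hex₁
  have hfinj : Function.Injective f := fun a b h => hinj₁ (by rw [← hf a, ← hf b, h])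
  have hfsurj : Function.Surjective f := by
    intro j
    obtain ⟨i, hi⟩ := hex₂ j
    exact ⟨i, hinj₂ (by rw [hf i, hi])⟩
  refine ⟨Equiv.ofBijective f ⟨hfinj, hfsurj⟩, fun i => ?_⟩
  have hl : lam₂ (f i) = lam₁ i := hf i
  have h1 := Pfam_eval_pole S (lam₁ i) (hmem₁ i) lam₁ k₁ d₁ hinj₁ i rfl
  have h2 := Pfam_eval_pole S (lam₁ i) (hmem₁ i) lam₂ k₂ d₂ hinj₂ (f i) hl
  have hWne := hW (lam₁ i) (hmem₁ i)
  have e1 : 2 * (d₂ (f i))^2 * (lam₁ i)^2 = 2 * (d₁ i)^2 * (lam₁ i)^2 := by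
    have := h1.1
    rw [hP, h2.1] at this
    exact (mul_right_cancel₀ hWne this.symm).symm
  have hsq : (d₂ (f i))^2 = (d₁ i)^2 := by
    have hlp := (hlam₁ i).ne'
    have hl2 : (lam₁ i)^2 ≠ 0 := pow_ne_zero 2 hlp
    have := mul_right_cancel₀ hl2 e1
    linarith
  have hd : d₂ (f i) = d₁ i := by
    have : |d₂ (f i)| = |d₁ i| := by
      rw [← Real.sqrt_sq_eq_abs, ← Real.sqrt_sq_eq_abs, hsq]
    rwa [abs_of_nonneg (hd₂ (f i)), abs_of_nonneg (hd₁ i)] at this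
  have hk : k₂ (f i) = k₁ i := by
    have e2 := h1.2
    rw [hP, h2.2, e1] at e2
    have := add_right_cancel e2
    have := mul_right_cancel₀ hWne this
    have hcast : (k₂ (f i) : ℝ) = (k₁ i : ℝ) := by linarith
    exact_mod_cast hcast
  exact ⟨hl, hk, hd⟩
end

section
/- Let Γ = AᵀA with A symplectic. Then det(Γ) = 1. Conversely, if Γ = AᵀTA with A symplectic, T diagonal with paired diagonal entries ν_i ≥ 1, and det(Γ) = 1, then T = I. -/
open Matrix MeasureTheory Real BigOperators

/-- The standard symplectic form on `2*S` coordinates: block diagonal with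
blocks `[[0,1],[-1,0]]`. -/
noncomputable def Jmat (S : ℕ) : Matrix (Fin (2*S)) (Fin (2*S)) ℝ :=
  Matrix.of fun i j =>
    if i.val % 2 = 0 ∧ j.val = i.val + 1 then 1
    else if j.val % 2 = 0 ∧ i.val = j.val + 1 then -1 else 0

/-- A real `2S × 2S` matrix is symplectic if `Aᵀ J A = J`. -/
def IsSymplectic {S : ℕ} (A : Matrix (Fin (2*S)) (Fin (2*S)) ℝ) : Prop :=
  Aᵀ * Jmat S * A = Jmat S

/-- The thermal diagonal matrix `diag (ν₁, ν₁, …, ν_S, ν_S)`. -/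
noncomputable def thermal {S : ℕ} (ν : Fin S → ℝ) :
    Matrix (Fin (2*S)) (Fin (2*S)) ℝ :=
  Matrix.diagonal fun i => ν ⟨i.val / 2, by omega⟩

set_option linter.unusedTactic false in
lemma Jmul (S : ℕ) : Jmat S * (Jmat S)ᵀ = 1 := by
  ext i j
  have hi := i.isLt
  have hj := j.isLt
  simp only [Matrix.mul_apply, Matrix.transpose_apply, Jmat, Matrix.of_apply,
    Matrix.one_apply, Fin.ext_iff]
  by_cases hpar : i.val % 2 = 0
  · have hlt : i.val + 1 < 2 * S := by omega
    rw [Finset.sum_eq_single (⟨i.val + 1, hlt⟩ : Fin (2*S))]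
    · rw [if_pos ⟨hpar, rfl⟩]
      by_cases hij : (i : ℕ) = (j : ℕ)
      · rw [if_pos ⟨by (try simp only [Fin.val_mk]); omega, by (try simp only [Fin.val_mk]); omega⟩,
          if_pos hij]
        norm_num
      · rw [if_neg (by rintro ⟨h1, h2⟩; (try simp only [Fin.val_mk] at h2); omega),
          if_neg (by rintro ⟨h1, h2⟩; (try simp only [Fin.val_mk] at h1 h2); omega),
          if_neg hij]
        norm_num
    · intro b _ hb
      have hbv : b.val ≠ i.val + 1 := fun h => hb (Fin.ext h)
      rw [if_neg (by rintro ⟨h1, h2⟩; omega), if_neg (by rintro ⟨h1, h2⟩; omega),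
        zero_mul]
    · exact fun h => absurd (Finset.mem_univ _) h
  · have hlt : i.val - 1 < 2 * S := by omega
    rw [Finset.sum_eq_single (⟨i.val - 1, hlt⟩ : Fin (2*S))]
    · rw [if_neg (by rintro ⟨h1, h2⟩; omega),
        if_pos ⟨by (try simp only [Fin.val_mk]); omega, by (try simp only [Fin.val_mk]); omega⟩]
      by_cases hij : (i : ℕ) = (j : ℕ)
      · rw [if_neg (by rintro ⟨h1, h2⟩; (try simp only [Fin.val_mk] at h2); omega),
          if_pos ⟨by (try simp only [Fin.val_mk]); omega, by (try simp only [Fin.val_mk]); omega⟩,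
          if_pos hij]
        norm_num
      · rw [if_neg (by rintro ⟨h1, h2⟩; (try simp only [Fin.val_mk] at h2); omega),
          if_neg (by rintro ⟨h1, h2⟩; (try simp only [Fin.val_mk] at h1 h2); omega),
          if_neg hij]
        norm_num
    · intro b _ hb
      have hbv : b.val ≠ i.val - 1 := fun h => hb (Fin.ext h)
      rw [if_neg (by rintro ⟨h1, h2⟩; omega), if_neg (by rintro ⟨h1, h2⟩; omega),
        zero_mul]
    · exact fun h => absurd (Finset.mem_univ _) h

lemma detA_sq {S : ℕ} {A : Matrix (Fin (2*S)) (Fin (2*S)) ℝ}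
    (hA : IsSymplectic A) : A.det ^ 2 = 1 := by
  have hJ : (Jmat S).det ≠ 0 := by
    intro h
    have := congrArg Matrix.det (Jmul S)
    rw [Matrix.det_mul, Matrix.det_transpose, h, Matrix.det_one] at this
    norm_num at this
  have h1 := congrArg Matrix.det hA
  rw [Matrix.det_mul, Matrix.det_mul, Matrix.det_transpose] at h1
  have h2 : (Jmat S).det * (A.det ^ 2 - 1) = 0 := by nlinarith [h1]
  rcases mul_eq_zero.mp h2 with h | h
  · exact absurd h hJ
  · linarith

lemma det_thermal {S : ℕ} (ν : Fin S → ℝ) :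
    (thermal ν).det = ∏ j : Fin S, ν j * ν j := by
  rw [thermal, Matrix.det_diagonal]
  have := Fintype.prod_bijective
    (fun p : Fin S × Fin 2 => (⟨2 * p.1.val + p.2.val, by omega⟩ : Fin (2*S)))
    ?_ (fun p => ν p.1) (fun i => ν ⟨i.val / 2, by omega⟩) ?_
  · rw [← this, Fintype.prod_prod_type]
    exact Finset.prod_congr rfl fun j _ => by rw [Fin.prod_univ_two]
  · constructor
    · intro a b hab
      have := congrArg Fin.val hab
      simp only at this
      have h1 := a.2.isLt; have h2 := b.2.isLt
      ext <;> omega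
    · intro i
      refine ⟨(⟨i.val / 2, by omega⟩, ⟨i.val % 2, by omega⟩), ?_⟩
      ext; simp; omega
  · intro p
    have h2 := p.2.isLt
    exact congrArg ν (Fin.ext (by simp; omega)).symm

lemma nu_eq_one {S : ℕ} (ν : Fin S → ℝ) (hν : ∀ i, 1 ≤ ν i)
    (h : ∏ j : Fin S, ν j * ν j = 1) : ∀ j, ν j = 1 := by
  have hrest : ∀ j : Fin S, 1 ≤ ∏ k ∈ Finset.univ.erase j, ν k * ν k := by
    intro j
    calc (1:ℝ) = ∏ _k ∈ Finset.univ.erase j, (1:ℝ) := by simp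
    _ ≤ _ := Finset.prod_le_prod (by intros; norm_num)
      (fun k _ => by nlinarith [hν k])
  intro j
  have hm := Finset.mul_prod_erase Finset.univ (fun k => ν k * ν k)
    (Finset.mem_univ j)
  rw [← hm] at h
  have h' : ν j * ν j * ∏ k ∈ Finset.univ.erase j, ν k * ν k = 1 := h
  have hjj : 1 ≤ ν j * ν j := by nlinarith [hν j]
  have hle : ν j * ν j ≤ 1 := by nlinarith [hrest j, h', hjj]
  nlinarith [hν j, hjj, hle]

/-- for `A` symplectic, `det(Aᵀ A) = 1`; conversely, if
`Γ = Aᵀ T A` with `T` thermal diagonal with `ν_i ≥ 1` and `det Γ = 1`,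
then `T = I`. -/
theorem pure_det_one_and_converse (S : ℕ)
    (A : Matrix (Fin (2*S)) (Fin (2*S)) ℝ) (hA : IsSymplectic A)
    (ν : Fin S → ℝ) (hν : ∀ i, 1 ≤ ν i) :
    (Aᵀ * A).det = 1 ∧
      ((Aᵀ * thermal ν * A).det = 1 → thermal ν = 1) := by
  have hsq := detA_sq hA
  constructor
  · rw [Matrix.det_mul, Matrix.det_transpose, ← sq]; exact hsq
  · intro hdet
    rw [Matrix.det_mul, Matrix.det_mul, Matrix.det_transpose, det_thermal] at hdet
    have h2 : A.det ^ 2 * ∏ j : Fin S, ν j * ν j = 1 := by rw [← hdet]; ring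
    rw [hsq, one_mul] at h2
    have hone := nu_eq_one ν hν h2
    unfold thermal
    have h1 : (fun i : Fin (2*S) => ν ⟨i.val / 2, by omega⟩) = fun _ => 1 :=
      funext fun i => hone _
    rw [h1, Matrix.diagonal_one]
end
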